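/- arXiv:2104.03932 — 4 statements merged into one kernel-verified Lean document; each statement's English description precedes it below -/
import Mathlib

section
/- Let $\ell : E \to \mathbb{Z}_{\ge 1}$ be an assignment of positive integer lengths to the edges of a graph $G$, with capacity $\gamma = \sum_{e \in E}(\ell_e - 1)$ and such that the $\ell$-distance between two designated vertex sets $S$ and $T$ is at least $\beta$. Then for any real $c \ge 1$, the assignment $\hat{\ell}_e := 1 + \lfloor (\ell_e - 1)/c \rfloor$ has capacity at most $\gamma/c$ and the $\hat{\ell}$-distance between $S$ and $T$ is at least $\beta/(1+c)$. -/
/-- Scaling a moving cut: if `ℓ` has capacity `γ` and `ℓ`-distance at least `β`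
between vertex sets `S` and `T`, then `ℓ'ₑ = 1 + ⌊(ℓₑ - 1)/c⌋` has capacity at
most `γ/c` and distance at least `β/(1+c)`. -/
theorem moving_cut_scaling {V : Type*} [Fintype V] [DecidableEq V]
    (G : SimpleGraph V) [DecidableRel G.Adj]
    (ℓ : Sym2 V → ℤ) (hℓ : ∀ e ∈ G.edgeSet, 1 ≤ ℓ e)
    (S T : Set V) (β c : ℝ) (hc : 1 ≤ c)
    (hdist : ∀ s ∈ S, ∀ t ∈ T, ∀ p : G.Walk s t,
      β ≤ (((p.edges.map ℓ).sum : ℤ) : ℝ))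
    (ℓ' : Sym2 V → ℤ)
    (hℓ' : ∀ e, ℓ' e = 1 + ⌊((ℓ e : ℝ) - 1) / c⌋) :
    ((∑ e ∈ G.edgeFinset, (ℓ' e - 1) : ℤ) : ℝ) ≤
      ((∑ e ∈ G.edgeFinset, (ℓ e - 1) : ℤ) : ℝ) / c ∧
    ∀ s ∈ S, ∀ t ∈ T, ∀ p : G.Walk s t,
      β / (1 + c) ≤ (((p.edges.map ℓ').sum : ℤ) : ℝ) := by
  have hc0 : (0:ℝ) < c := by linarith
  have hedgekey : ∀ e ∈ G.edgeSet, (ℓ e : ℝ) ≤ (1 + c) * (ℓ' e : ℝ) := by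
    intro e he
    have h1 : 1 ≤ ℓ e := hℓ e he
    rw [hℓ' e]
    push_cast
    set f : ℝ := (⌊((ℓ e : ℝ) - 1) / c⌋ : ℝ) with hfdef
    have h1' : (1:ℝ) ≤ (ℓ e : ℝ) := by exact_mod_cast h1
    have hf0 : (0:ℝ) ≤ f := by
      have : (0:ℤ) ≤ ⌊((ℓ e : ℝ) - 1) / c⌋ :=
        Int.floor_nonneg.2 (div_nonneg (by linarith) hc0.le)
      exact Int.cast_nonneg_iff.mpr this
    have hflt : ((ℓ e : ℝ) - 1) / c - 1 < f := Int.sub_one_lt_floor _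
    have h3 : (ℓ e : ℝ) - 1 < c * (f + 1) := by
      have := (div_lt_iff₀ hc0).mp (by linarith : ((ℓ e : ℝ) - 1) / c < f + 1)
      linarith
    nlinarith
  constructor
  · rw [le_div_iff₀ hc0]
    push_cast
    rw [Finset.sum_mul]
    apply Finset.sum_le_sum
    intro e he
    have he' : e ∈ G.edgeSet := SimpleGraph.mem_edgeFinset.mp he
    have hfl : ((ℓ' e : ℝ) - 1) ≤ ((ℓ e : ℝ) - 1) / c := by
      rw [hℓ' e]
      push_cast
      have := Int.floor_le (((ℓ e : ℝ) - 1) / c)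
      linarith
    calc ((ℓ' e : ℝ) - 1) * c ≤ (((ℓ e : ℝ) - 1) / c) * c := by
          exact mul_le_mul_of_nonneg_right hfl hc0.le
      _ = (ℓ e : ℝ) - 1 := by field_simp
  · intro s hs t ht p
    have key : ∀ L : List (Sym2 V), (∀ e ∈ L, e ∈ G.edgeSet) →
        (((L.map ℓ).sum : ℤ) : ℝ) ≤ (1 + c) * (((L.map ℓ').sum : ℤ) : ℝ) := by
      intro L
      induction L with
      | nil => simp
      | cons a L ih =>
        intro h
        have ha := h a (by simp)
        have hih := ih (fun e he => h e (List.mem_cons_of_mem _ he))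
        have hae := hedgekey a ha
        simp only [List.map_cons, List.sum_cons]
        push_cast
        push_cast at hih
        nlinarith
    have hkey := key p.edges (fun e he => p.edges_subset_edgeSet he)
    have hβ := hdist s hs t ht p
    rw [div_le_iff₀ (by linarith : (0:ℝ) < 1 + c)]
    nlinarith
end

section
/- Let $R$ be a connected graph on $k \ge 3$ vertices, let $H = \{v : \deg_R(v) \ge 3\}$, and suppose $|\Gamma^+_R(H)| \le k/10$. Let $O$ be the set of vertices at $R$-distance at least 10 from $H$. Then $|O| \ge k/10$. -/
open SimpleGraph in
lemma far_step_down {V : Type*} (R : SimpleGraph V) (hconn : R.Connected)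
    (v h : V) (n : ℕ) (hd : R.dist v h = n + 1) :
    ∃ u, R.Adj v u ∧ R.dist u h = n := by
  obtain ⟨p, hp⟩ := hconn.exists_walk_length_eq_dist v h
  rw [hd] at hp
  cases p with
  | nil => simp at hp
  | @cons _ u _ hadj q =>
    simp only [Walk.length_cons, Nat.add_right_cancel_iff] at hp
    refine ⟨u, hadj, le_antisymm (hp ▸ R.dist_le q) ?_⟩
    have ht := hconn.dist_triangle (u := v) (v := u) (w := h)
    have h1 : R.dist v u = 1 := SimpleGraph.dist_eq_one_iff_adj.mpr hadj
    omega

/-- If the closed neighborhood of the set `H` of vertices of degree ≥ 3 in a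
connected graph `R` on `k ≥ 3` vertices has size at most `k/10`, then the set
`O` of vertices at distance at least `10` from `H` has size at least `k/10`. -/
theorem far_vertices_many {V : Type*} [Fintype V] [DecidableEq V]
    (R : SimpleGraph V) [DecidableRel R.Adj] (hconn : R.Connected)
    (k : ℕ) (hk : Fintype.card V = k) (h3 : 3 ≤ k)
    (H : Finset V) (hH : H = Finset.univ.filter (fun v => 3 ≤ R.degree v))
    (hsmall : 10 * (H ∪ Finset.univ.filter (fun v => ∃ h ∈ H, R.Adj v h)).card ≤ k)
    (O : Finset V) (hO : ∀ v, v ∈ O ↔ ∀ h ∈ H, 10 ≤ R.dist v h) :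
    k ≤ 10 * O.card := by
  classical
  rcases H.eq_empty_or_nonempty with hHe | hne
  · have : O = Finset.univ := by
      ext v; simp [hO v, hHe]
    rw [this]
    simp only [Finset.card_univ, hk]
    omega
  set f : V → ℕ := fun v => H.inf' hne (fun h => R.dist v h) with hf
  -- f v = 0 ↔ v ∈ H
  have h0 : ∀ v, f v = 0 ↔ v ∈ H := by
    intro v
    constructor
    · intro hv
      obtain ⟨h₀, hh₀, heq⟩ := Finset.exists_mem_eq_inf' hne (fun h => R.dist v h)
      have heq' : f v = R.dist v h₀ := heq
      have : R.dist v h₀ = 0 := by omega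
      rw [hconn.dist_eq_zero_iff] at this
      rwa [this]
    · intro hv
      have h1 : f v ≤ R.dist v v := Finset.inf'_le _ hv
      have h2 : R.dist v v = 0 := by simp
      omega
  -- Lipschitz
  have hlip : ∀ v u, R.Adj v u → f v ≤ f u + 1 := by
    intro v u hadj
    obtain ⟨h₀, hh₀, heq⟩ := Finset.exists_mem_eq_inf' hne (fun h => R.dist u h)
    have heq' : f u = R.dist u h₀ := heq
    have h1 : f v ≤ R.dist v h₀ := Finset.inf'_le _ hh₀
    have ht := hconn.dist_triangle (u := v) (v := u) (w := h₀)
    have hvu : R.dist v u = 1 := SimpleGraph.dist_eq_one_iff_adj.mpr hadj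
    omega
  -- step down
  have hstep : ∀ v n, f v = n + 1 → ∃ u, R.Adj v u ∧ f u = n := by
    intro v n hv
    obtain ⟨h₀, hh₀, heq⟩ := Finset.exists_mem_eq_inf' hne (fun h => R.dist v h)
    have heq' : f v = R.dist v h₀ := heq
    have hd : R.dist v h₀ = n + 1 := by omega
    obtain ⟨u, hadj, hdu⟩ := far_step_down R hconn v h₀ n hd
    have h1 : f u ≤ n := by
      have h1' : f u ≤ R.dist u h₀ := Finset.inf'_le _ hh₀
      omega
    have h2 := hlip v u hadj
    exact ⟨u, hadj, by omega⟩
  -- degree bound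
  have hdeg : ∀ v, v ∉ H → R.degree v ≤ 2 := by
    intro v hv
    rw [hH] at hv
    simp only [Finset.mem_filter, Finset.mem_univ, true_and, not_le] at hv
    omega
  -- at most one neighbor going up
  have hfiber : ∀ j, 1 ≤ j → ∀ u, f u = j →
      ((R.neighborFinset u).filter (fun a => f a = j + 1)).card ≤ 1 := by
    intro j hj u hu
    by_contra hc
    push_neg at hc
    obtain ⟨a, ha, b, hb, hab⟩ := Finset.one_lt_card.mp hc
    simp only [Finset.mem_filter, SimpleGraph.mem_neighborFinset] at ha hb
    obtain ⟨w, hw, hfw⟩ := hstep u (j - 1) (by omega)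
    have haw : a ≠ w := fun h => by subst h; omega
    have hbw : b ≠ w := fun h => by subst h; omega
    have hsub : ({a, b, w} : Finset V) ⊆ R.neighborFinset u := by
      intro x hx
      simp only [Finset.mem_insert, Finset.mem_singleton] at hx
      rcases hx with rfl | rfl | rfl
      · exact (SimpleGraph.mem_neighborFinset ..).mpr ha.1
      · exact (SimpleGraph.mem_neighborFinset ..).mpr hb.1
      · exact (SimpleGraph.mem_neighborFinset ..).mpr hw
    have hcard : ({a, b, w} : Finset V).card = 3 := by
      rw [Finset.card_insert_of_notMem (by simp [hab, haw]),
        Finset.card_insert_of_notMem (by simp [hbw]), Finset.card_singleton]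
    have h3' : 3 ≤ R.degree u := by
      rw [SimpleGraph.degree, ← hcard]
      exact Finset.card_le_card hsub
    have huH : u ∉ H := fun h => by have := (h0 u).mpr h; omega
    have := hdeg u huH
    omega
  -- layer cardinalities
  set m : ℕ → ℕ := fun j => (Finset.univ.filter (fun v => f v = j)).card with hm
  have hmono : ∀ j, 1 ≤ j → m (j + 1) ≤ m j := by
    intro j hj
    set g : V → V := fun v => if hv : ∃ u, R.Adj v u ∧ f u = j then Classical.choose hv else v
      with hg
    apply Finset.card_le_card_of_injOn g
    · intro v hv
      simp only [Finset.mem_coe, Finset.mem_filter, Finset.mem_univ, true_and] at hv ⊢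
      have hex : ∃ u, R.Adj v u ∧ f u = j := hstep v j hv
      simp only [hg, dif_pos hex]
      exact (Classical.choose_spec hex).2
    · intro a ha b hb heq
      simp only [Finset.coe_filter, Set.mem_setOf_eq, Finset.mem_univ, true_and] at ha hb
      have hexa : ∃ u, R.Adj a u ∧ f u = j := hstep a j ha
      have hexb : ∃ u, R.Adj b u ∧ f u = j := hstep b j hb
      simp only [hg, dif_pos hexa, dif_pos hexb] at heq
      obtain ⟨hadja, hfa⟩ := Classical.choose_spec hexa
      obtain ⟨hadjb, hfb⟩ := Classical.choose_spec hexb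
      set u := Classical.choose hexa with hu
      have hcard := hfiber j hj u hfa
      have hma : a ∈ (R.neighborFinset u).filter (fun x => f x = j + 1) := by
        simp [SimpleGraph.mem_neighborFinset, hadja.symm, ha]
      have hmb : b ∈ (R.neighborFinset u).filter (fun x => f x = j + 1) := by
        rw [← heq] at hadjb
        simp [SimpleGraph.mem_neighborFinset, hadjb.symm, hb]
      exact Finset.card_le_one.mp hcard a hma b hmb
  -- the closed neighborhood bound
  set C : ℕ := (H ∪ Finset.univ.filter (fun v => ∃ h ∈ H, R.Adj v h)).card with hC
  have hL0 : Finset.univ.filter (fun v => f v = 0) = H := by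
    ext v; simp [h0 v]
  have hL1sub : Finset.univ.filter (fun v => f v = 1) ⊆
      Finset.univ.filter (fun v => ∃ h ∈ H, R.Adj v h) := by
    intro v hv
    simp only [Finset.mem_filter, Finset.mem_univ, true_and] at hv ⊢
    obtain ⟨u, hadj, hfu⟩ := hstep v 0 hv
    exact ⟨u, (h0 u).mp hfu, hadj⟩
  have h01 : m 0 + m 1 ≤ C := by
    have hdisj : Disjoint (Finset.univ.filter (fun v => f v = 0))
        (Finset.univ.filter (fun v => f v = 1)) := by
      rw [Finset.disjoint_left]
      intro x hx hx'
      simp only [Finset.mem_filter] at hx hx'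
      omega
    have := Finset.card_union_of_disjoint hdisj
    rw [hm]
    rw [← this]
    apply Finset.card_le_card
    rw [hL0]
    exact Finset.union_subset_union (le_refl H) hL1sub
  have hm1 : m 1 ≤ C := by
    apply Finset.card_le_card
    exact hL1sub.trans (Finset.subset_union_right)
  -- partition count
  have hpart : (Finset.univ.filter (fun v => f v < 10)).card = ∑ j ∈ Finset.range 10, m j := by
    rw [Finset.card_eq_sum_card_fiberwise (f := f) (t := Finset.range 10)
      (fun x hx => by simpa using (Finset.mem_filter.mp hx).2)]
    apply Finset.sum_congr rfl
    intro j hj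
    simp only [Finset.mem_range] at hj
    congr 1
    rw [Finset.filter_filter]
    apply Finset.filter_congr
    intro x _
    exact ⟨fun h => h.2, fun h => ⟨by omega, h⟩⟩
  -- O is the far set
  have hOeq : O = Finset.univ.filter (fun v => 10 ≤ f v) := by
    ext v
    simp only [Finset.mem_filter, Finset.mem_univ, true_and, hO v, hf]
    exact (Finset.le_inf'_iff hne _).symm
  have hsplit : (Finset.univ.filter (fun v => f v < 10)).card + O.card = k := by
    rw [hOeq]
    have h := Finset.card_filter_add_card_filter_not (s := (Finset.univ : Finset V))
      (p := fun v => f v < 10)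
    simp only [not_lt, Finset.card_univ, hk] at h
    exact h
  -- final arithmetic
  have e2 : m 2 ≤ m 1 := hmono 1 (by omega)
  have e3 : m 3 ≤ m 2 := hmono 2 (by omega)
  have e4 : m 4 ≤ m 3 := hmono 3 (by omega)
  have e5 : m 5 ≤ m 4 := hmono 4 (by omega)
  have e6 : m 6 ≤ m 5 := hmono 5 (by omega)
  have e7 : m 7 ≤ m 6 := hmono 6 (by omega)
  have e8 : m 8 ≤ m 7 := hmono 7 (by omega)
  have e9 : m 9 ≤ m 8 := hmono 8 (by omega)
  have hsum : ∑ j ∈ Finset.range 10, m j =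
      m 0 + m 1 + m 2 + m 3 + m 4 + m 5 + m 6 + m 7 + m 8 + m 9 := by
    simp [Finset.sum_range_succ]
  omega
end

section
/- Let $G$ be a graph of diameter $D$ and let $f = (f_0, f_1, \dots, f_\ell)$ be a simple path in the contraction graph $R$ (of some vertex-disjoint paths $\{p_i\}$) with $\ell \ge 9$ such that every vertex on $f$ has $R$-degree at most 2. Then there exists a simple path $w'$ in $G$ of hop-length at most $D$ whose projection to $R$ is supported on $f$ and intersects exactly $x+1$ of the part-paths, where $x = 3\lceil \ell/9 \rceil - 1$; moreover the intersected parts are consecutive along $f$. -/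
open SimpleGraph Walk

section Aux

variable {V : Type*} {G : SimpleGraph V}

private lemma aux_one_le_length {u v : V} (w : G.Walk u v) (h : u ≠ v) : 1 ≤ w.length := by
  cases w with
  | nil => exact absurd rfl h
  | cons _ _ => simp [Walk.length_cons]

private lemma aux_firstHit {u v : V} (w : G.Walk u v) (A : V → Prop)
    (h : ∃ z ∈ w.support, A z) :
    ∃ (a : V) (w₁ : G.Walk u a) (w₂ : G.Walk a v),
      w = w₁.append w₂ ∧ A a ∧ ∀ z ∈ w₁.support, A z → z = a := by
  classical
  induction w with
  | nil =>
      obtain ⟨z, hz, hzA⟩ := h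
      simp only [Walk.support_nil, List.mem_singleton] at hz
      subst hz
      exact ⟨z, .nil, .nil, rfl, hzA, by intro z' hz' _; simpa using hz'⟩
  | @cons a b c hadj w ih =>
      by_cases ha : A a
      · exact ⟨a, .nil, .cons hadj w, rfl, ha, by intro z hz _; simpa using hz⟩
      · obtain ⟨z, hz, hzA⟩ := h
        rw [Walk.support_cons] at hz
        rcases List.mem_cons.mp hz with rfl | hz
        · exact absurd hzA ha
        · obtain ⟨a', w₁, w₂, heq, ha', hprop⟩ := ih ⟨z, hz, hzA⟩
          refine ⟨a', .cons hadj w₁, w₂, by rw [Walk.cons_append, heq], ha', ?_⟩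
          intro z' hz' hz'A
          rw [Walk.support_cons] at hz'
          rcases List.mem_cons.mp hz' with rfl | hz'
          · exact absurd hz'A ha
          · exact hprop z' hz' hz'A

private lemma aux_lastHit {u v : V} (w : G.Walk u v) (A : V → Prop)
    (h : ∃ z ∈ w.support, A z) :
    ∃ (a : V) (w₁ : G.Walk u a) (w₂ : G.Walk a v),
      w = w₁.append w₂ ∧ A a ∧ ∀ z ∈ w₂.support, A z → z = a := by
  obtain ⟨a, r₁, r₂, heq, ha, hprop⟩ := aux_firstHit w.reverse A
    (by obtain ⟨z, hz, hzA⟩ := h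
        exact ⟨z, by rw [Walk.support_reverse, List.mem_reverse]; exact hz, hzA⟩)
  refine ⟨a, r₂.reverse, r₁.reverse, ?_, ha, ?_⟩
  · rw [← Walk.reverse_append, ← heq, Walk.reverse_reverse]
  · intro z hz
    apply hprop
    rw [Walk.support_reverse, List.mem_reverse] at hz
    exact hz

end Aux

section Main

variable {V : Type*} [Fintype V] [DecidableEq V] {G : SimpleGraph V}
  {k : ℕ} {s t : Fin k → V} {p : ∀ i, G.Walk (s i) (t i)}
  {R : SimpleGraph (Fin k)} {f : ℕ → Fin k} {ℓ : ℕ}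

private lemma aux_puniq (hdisj : ∀ i j, i ≠ j → ∀ v ∈ (p i).support, v ∉ (p j).support)
    {z : V} {i j : Fin k} (hi : z ∈ (p i).support) (hj : z ∈ (p j).support) : i = j := by
  by_contra h
  exact hdisj i j h z hi hj

private lemma aux_fc
    (hdisj : ∀ i j, i ≠ j → ∀ v ∈ (p i).support, v ∉ (p j).support)
    (hR : ∀ i j, R.Adj i j ↔ i ≠ j ∧ ∃ (a b : V) (w : G.Walk a b),
      a ∈ (p i).support ∧ b ∈ (p j).support ∧
      ∀ v ∈ w.support, v ≠ a → v ≠ b → ∀ y, v ∉ (p y).support)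
    {u v : V} (w : G.Walk u v) (ii : Fin k) (hu : u ∈ (p ii).support)
    (hex : ∃ z ∈ w.support, ∃ i, i ≠ ii ∧ z ∈ (p i).support) :
    ∃ (i : Fin k) (b : V) (w₁ : G.Walk u b) (w₂ : G.Walk b v),
      w = w₁.append w₂ ∧ b ∈ (p i).support ∧ i ≠ ii ∧ R.Adj ii i ∧ 1 ≤ w₁.length ∧
      ∀ z ∈ w₁.support, ∀ i', z ∈ (p i').support → i' = ii ∨ z = b := by
  classical
  obtain ⟨bb, wa, wb, heq, ⟨i, hine, hbi⟩, hprop⟩ :=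
    aux_firstHit w (fun z => ∃ i, i ≠ ii ∧ z ∈ (p i).support) hex
  obtain ⟨aa, wa1, c, heq2, haa, hprop2⟩ :=
    aux_lastHit wa (fun z => z ∈ (p ii).support) ⟨u, wa.start_mem_support, hu⟩
  have hadj : R.Adj ii i := by
    rw [hR]
    refine ⟨Ne.symm hine, aa, bb, c, haa, hbi, ?_⟩
    intro z hzc hza hzb y hzy
    by_cases hy : y = ii
    · exact hza (hprop2 z hzc (by rwa [hy] at hzy))
    · have hz' : z ∈ wa.support := by
        rw [heq2]
        exact (Walk.mem_support_append_iff _ _).mpr (Or.inr hzc)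
      exact hzb (hprop z hz' ⟨y, hy, hzy⟩)
  have hne : u ≠ bb := by
    intro h
    exact hine (aux_puniq hdisj hbi (h ▸ hu))
  refine ⟨i, bb, wa, wb, heq, hbi, hine, hadj, aux_one_le_length wa hne, ?_⟩
  intro z hz i' hzi'
  by_cases h' : i' = ii
  · exact Or.inl h'
  · exact Or.inr (hprop z hz ⟨i', h', hzi'⟩)

private lemma aux_nbr
    (hfinj : ∀ i j, i ≤ ℓ → j ≤ ℓ → f i = f j → i = j)
    (hfadj : ∀ i, i < ℓ → R.Adj (f i) (f (i + 1)))
    (hdeg : ∀ i, i ≤ ℓ → {j | R.Adj (f i) j}.ncard ≤ 2)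
    {m : ℕ} (h0 : 0 < m) (hm : m < ℓ)
    {i : Fin k} (hadj : R.Adj (f m) i) : i = f (m + 1) ∨ i = f (m - 1) := by
  by_contra hcon
  push_neg at hcon
  obtain ⟨h1, h2⟩ := hcon
  have ha1 : R.Adj (f m) (f (m + 1)) := hfadj m hm
  have ha2 : R.Adj (f m) (f (m - 1)) := by
    have h := hfadj (m - 1) (by omega)
    have hmm : m - 1 + 1 = m := by omega
    rw [hmm] at h
    exact h.symm
  have hne12 : f (m + 1) ≠ f (m - 1) := by
    intro h
    have := hfinj _ _ (by omega) (by omega) h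
    omega
  have hsub : ({f (m + 1), f (m - 1), i} : Set (Fin k)) ⊆ {j | R.Adj (f m) j} := by
    intro j hj
    rcases hj with rfl | rfl | rfl
    · exact ha1
    · exact ha2
    · exact hadj
  have h3 : ({f (m + 1), f (m - 1), i} : Set (Fin k)).ncard = 3 := by
    rw [Set.ncard_insert_of_notMem (by simp [hne12, Ne.symm h1]),
      Set.ncard_pair (Ne.symm h2)]
  have hle := Set.ncard_le_ncard hsub (Set.toFinite _)
  have := hdeg m (le_of_lt hm)
  omega

private lemma aux_step
    (hfinj : ∀ i j, i ≤ ℓ → j ≤ ℓ → f i = f j → i = j)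
    (hfadj : ∀ i, i < ℓ → R.Adj (f i) (f (i + 1)))
    (hdeg : ∀ i, i ≤ ℓ → {j | R.Adj (f i) j}.ncard ≤ 2)
    {lo hi m m' : ℕ} (hhi : hi ≤ ℓ) (hsane : 0 < lo ∨ hi < ℓ)
    (hm1 : lo ≤ m) (hm2 : m ≤ hi) (hm'1 : lo ≤ m') (hm'2 : m' ≤ hi)
    (hadj : R.Adj (f m) (f m')) : m' = m + 1 ∨ m' + 1 = m := by
  have hneq : m ≠ m' := by
    intro h
    exact R.irrefl (h ▸ hadj)
  by_cases hint : 0 < m ∧ m < ℓ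
  · rcases aux_nbr hfinj hfadj hdeg hint.1 hint.2 hadj with h | h
    · left; exact hfinj _ _ (by omega) (by omega) h
    · right
      have := hfinj _ _ (by omega) (by omega) h
      omega
  · have hint' : 0 < m' ∧ m' < ℓ := by omega
    rcases aux_nbr hfinj hfadj hdeg hint'.1 hint'.2 hadj.symm with h | h
    · right
      have := hfinj _ _ (by omega) (by omega) h
      omega
    · left
      have := hfinj _ _ (by omega) (by omega) h
      omega

private lemma aux_ivt
    (hdisj : ∀ i j, i ≠ j → ∀ v ∈ (p i).support, v ∉ (p j).support)
    (hR : ∀ i j, R.Adj i j ↔ i ≠ j ∧ ∃ (a b : V) (w : G.Walk a b),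
      a ∈ (p i).support ∧ b ∈ (p j).support ∧
      ∀ v ∈ w.support, v ≠ a → v ≠ b → ∀ y, v ∉ (p y).support)
    (hfinj : ∀ i j, i ≤ ℓ → j ≤ ℓ → f i = f j → i = j)
    (hfadj : ∀ i, i < ℓ → R.Adj (f i) (f (i + 1)))
    (hdeg : ∀ i, i ≤ ℓ → {j | R.Adj (f i) j}.ncard ≤ 2)
    {lo hi : ℕ} (hhi : hi ≤ ℓ) (hsane : 0 < lo ∨ hi < ℓ) :
    ∀ N : ℕ, ∀ {u v : V} (w : G.Walk u v), w.length ≤ N →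
      ∀ {α β γ : ℕ}, u ∈ (p (f α)).support → v ∈ (p (f β)).support →
      lo ≤ α → α ≤ hi → lo ≤ β → β ≤ hi → α ≤ γ → γ ≤ β →
      (∀ z ∈ w.support, ∀ i, z ∈ (p i).support → ∃ m, lo ≤ m ∧ m ≤ hi ∧ i = f m) →
      ∃ z ∈ w.support, z ∈ (p (f γ)).support := by
  intro N
  induction N with
  | zero =>
      intro u v w hlen α β γ hu hv hα1 hα2 hβ1 hβ2 hαγ hγβ hwin
      cases w with
      | nil =>
          have hfeq : f α = f β := aux_puniq hdisj hu hv
          have hαβ : α = β := hfinj _ _ (by omega) (by omega) hfeq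
          have hγ : γ = α := by omega
          exact ⟨u, by simp, by rw [hγ]; exact hu⟩
      | cons h w => simp at hlen
  | succ N ih =>
      intro u v w hlen α β γ hu hv hα1 hα2 hβ1 hβ2 hαγ hγβ hwin
      by_cases hαγ' : α = γ
      · exact ⟨u, w.start_mem_support, hαγ' ▸ hu⟩
      have hlt : α < γ := lt_of_le_of_ne hαγ hαγ'
      have hfne : f β ≠ f α := by
        intro h
        have := hfinj _ _ (by omega) (by omega) h
        omega
      obtain ⟨i, b, w₁, w₂, heq, hb, hine, hadj, h1len, hprop⟩ :=
        aux_fc hdisj hR w (f α) hu ⟨v, w.end_mem_support, f β, hfne, hv⟩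
      obtain ⟨m'', hma, hmb, rfl⟩ := hwin b
        (by rw [heq]; exact (Walk.mem_support_append_iff _ _).mpr (Or.inr w₂.start_mem_support))
        i hb
      have hstep := aux_step hfinj hfadj hdeg hhi hsane hα1 hα2 hma hmb hadj
      have hlen₂ : w₂.length ≤ N := by
        have h := congrArg Walk.length heq
        rw [Walk.length_append] at h
        omega
      obtain ⟨z, hz, hzγ⟩ := ih w₂ hlen₂ hb hv hma hmb hβ1 hβ2 (by omega) hγβ
        (fun z hz => hwin z (by rw [heq]; exact (Walk.mem_support_append_iff _ _).mpr (Or.inr hz)))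
      exact ⟨z, by rw [heq]; exact (Walk.mem_support_append_iff _ _).mpr (Or.inr hz), hzγ⟩

private lemma aux_nooff
    (hdisj : ∀ i j, i ≠ j → ∀ v ∈ (p i).support, v ∉ (p j).support)
    (hR : ∀ i j, R.Adj i j ↔ i ≠ j ∧ ∃ (a b : V) (w : G.Walk a b),
      a ∈ (p i).support ∧ b ∈ (p j).support ∧
      ∀ v ∈ w.support, v ≠ a → v ≠ b → ∀ y, v ∉ (p y).support)
    (hfinj : ∀ i j, i ≤ ℓ → j ≤ ℓ → f i = f j → i = j)
    (hfadj : ∀ i, i < ℓ → R.Adj (f i) (f (i + 1)))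
    (hdeg : ∀ i, i ≤ ℓ → {j | R.Adj (f i) j}.ncard ≤ 2)
    (z₀ : V) (i₀ : Fin k) (hz₀p : z₀ ∈ (p i₀).support)
    (hoff : ∀ t', t' ≤ ℓ → i₀ ≠ f t') :
    ∀ N : ℕ, ∀ {u v : V} (w : G.Walk u v), w.length ≤ N → ∀ {m : ℕ},
      u ∈ (p (f m)).support → 0 < m → m < ℓ →
      (∀ z ∈ w.support, ∀ i, z ∈ (p i).support → (∃ m', 0 < m' ∧ m' < ℓ ∧ i = f m') ∨ z = z₀) →
      z₀ ∈ w.support → False := by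
  intro N
  induction N with
  | zero =>
      intro u v w hlen m hu h0 hm hwin hz₀
      cases w with
      | nil =>
          simp only [Walk.support_nil, List.mem_singleton] at hz₀
          exact hoff m (by omega) (aux_puniq hdisj hz₀p (by rw [hz₀]; exact hu))
      | cons h w => simp at hlen
  | succ N ih =>
      intro u v w hlen m hu h0 hm hwin hz₀
      have hex : ∃ z ∈ w.support, ∃ i, i ≠ f m ∧ z ∈ (p i).support :=
        ⟨z₀, hz₀, i₀, hoff m (by omega), hz₀p⟩
      obtain ⟨i, b, w₁, w₂, heq, hb, hine, hadj, h1len, hprop⟩ := aux_fc hdisj hR w (f m) hu hex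
      have hbmem : b ∈ w.support := by
        rw [heq]; exact (Walk.mem_support_append_iff _ _).mpr (Or.inr w₂.start_mem_support)
      rcases hwin b hbmem i hb with ⟨m', h0', hm', rfl⟩ | hbz
      · have hz₀w₂ : z₀ ∈ w₂.support := by
          rw [heq] at hz₀
          rcases (Walk.mem_support_append_iff _ _).mp hz₀ with h | h
          · rcases hprop z₀ h i₀ hz₀p with h' | h'
            · exact absurd h' (hoff m (by omega))
            · exfalso
              exact hoff m' (by omega) (aux_puniq hdisj hz₀p (by rw [h']; exact hb))
          · exact h
        have hlen₂ : w₂.length ≤ N := by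
          have h := congrArg Walk.length heq
          rw [Walk.length_append] at h
          omega
        exact ih w₂ hlen₂ hb h0' hm'
          (fun z hz => hwin z (by rw [heq]; exact (Walk.mem_support_append_iff _ _).mpr (Or.inr hz)))
          hz₀w₂
      · have hbi₀ : b ∈ (p i₀).support := by rw [hbz]; exact hz₀p
        have hii : i = i₀ := aux_puniq hdisj hb hbi₀
        rcases aux_nbr hfinj hfadj hdeg h0 hm (show R.Adj (f m) i₀ from hii ▸ hadj) with h | h
        · exact hoff (m + 1) (by omega) h
        · exact hoff (m - 1) (by omega) h

private lemma aux_cross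
    (hdisj : ∀ i j, i ≠ j → ∀ v ∈ (p i).support, v ∉ (p j).support)
    (hR : ∀ i j, R.Adj i j ↔ i ≠ j ∧ ∃ (a b : V) (w : G.Walk a b),
      a ∈ (p i).support ∧ b ∈ (p j).support ∧
      ∀ v ∈ w.support, v ≠ a → v ≠ b → ∀ y, v ∉ (p y).support)
    (hfinj : ∀ i j, i ≤ ℓ → j ≤ ℓ → f i = f j → i = j)
    (hfadj : ∀ i, i < ℓ → R.Adj (f i) (f (i + 1)))
    (hdeg : ∀ i, i ≤ ℓ → {j | R.Adj (f i) j}.ncard ≤ 2)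
    {lo hi : ℕ} (hhi : hi ≤ ℓ) (hsane : 0 < lo ∨ hi < ℓ)
    {u v : V} (w : G.Walk u v) (hw : w.IsPath)
    {α β j x : ℕ} (hu : u ∈ (p (f α)).support) (hv : v ∈ (p (f β)).support)
    (hα1 : lo ≤ α) (hα2 : α ≤ hi) (hβ1 : lo ≤ β) (hβ2 : β ≤ hi)
    (hj : α ≤ j) (hjx : j + x ≤ β)
    (hwin : ∀ z ∈ w.support, ∀ i, z ∈ (p i).support → ∃ m, lo ≤ m ∧ m ≤ hi ∧ i = f m) :
    ∃ (a b : V) (w' : G.Walk a b), w'.IsPath ∧ w'.length ≤ w.length ∧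
      ∀ i : Fin k, (∃ z ∈ w'.support, z ∈ (p i).support) ↔ ∃ m ≤ x, i = f (j + m) := by
  classical
  have hvis : ∃ z ∈ w.support, z ∈ (p (f (j + x))).support :=
    aux_ivt hdisj hR hfinj hfadj hdeg hhi hsane w.length w le_rfl hu hv
      hα1 hα2 hβ1 hβ2 (by omega) hjx hwin
  obtain ⟨b', w₁, w₂, heq1, hb', hfirst⟩ :=
    aux_firstHit w (fun z => z ∈ (p (f (j + x))).support) hvis
  have hw₁ : w₁.IsPath := by
    rw [heq1] at hw
    exact hw.of_append_left
  have hsupw : ∀ z ∈ w₁.support, z ∈ w.support := by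
    intro z hz
    rw [heq1]
    exact (Walk.mem_support_append_iff _ _).mpr (Or.inl hz)
  have hwin₁ : ∀ z ∈ w₁.support, ∀ i, z ∈ (p i).support → ∃ m, lo ≤ m ∧ m ≤ hi ∧ i = f m :=
    fun z hz => hwin z (hsupw z hz)
  have hvisj : ∃ z ∈ w₁.support, z ∈ (p (f j)).support :=
    aux_ivt hdisj hR hfinj hfadj hdeg hhi hsane w₁.length w₁ le_rfl hu hb'
      hα1 hα2 (by omega) (by omega) hj (by omega) hwin₁
  obtain ⟨a', w₁₁, c, heq2, ha', hlast⟩ := aux_lastHit w₁ (fun z => z ∈ (p (f j)).support) hvisj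
  have hc : c.IsPath := by
    rw [heq2] at hw₁
    exact hw₁.of_append_right
  have hsupc : ∀ z ∈ c.support, z ∈ w₁.support := by
    intro z hz
    rw [heq2]
    exact (Walk.mem_support_append_iff _ _).mpr (Or.inr hz)
  have hwinc : ∀ z ∈ c.support, ∀ i, z ∈ (p i).support → ∃ m, lo ≤ m ∧ m ≤ hi ∧ i = f m :=
    fun z hz => hwin₁ z (hsupc z hz)
  have hlenc : c.length ≤ w.length := by
    have h1 := congrArg Walk.length heq1
    have h2 := congrArg Walk.length heq2
    rw [Walk.length_append] at h1 h2
    omega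
  refine ⟨a', b', c, hc, hlenc, ?_⟩
  intro i
  constructor
  · rintro ⟨z, hz, hzi⟩
    obtain ⟨t', ht'1, ht'2, rfl⟩ := hwinc z hz i hzi
    by_cases hlt : t' < j
    · exfalso
      obtain ⟨zz, c₁, c₂, heq3, hzz, -⟩ := aux_firstHit c (fun y => y = z) ⟨z, hz, rfl⟩
      have hzzi : zz ∈ (p (f t')).support := by rw [hzz]; exact hzi
      have hwinc₂ : ∀ z' ∈ c₂.support, ∀ i, z' ∈ (p i).support →
          ∃ m, lo ≤ m ∧ m ≤ hi ∧ i = f m := by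
        intro z' hz' i hzi'
        exact hwinc z' (by rw [heq3]; exact (Walk.mem_support_append_iff _ _).mpr (Or.inr hz')) i hzi'
      obtain ⟨z', hz', hz'j⟩ :=
        aux_ivt hdisj hR hfinj hfadj hdeg hhi hsane c₂.length c₂ le_rfl (γ := j) hzzi hb'
          ht'1 ht'2 (by omega) (by omega) (by omega) (by omega) hwinc₂
      have hz'a : z' = a' := hlast z'
        (by rw [heq3]; exact (Walk.mem_support_append_iff _ _).mpr (Or.inr hz')) hz'j
      subst hz'a
      have haz : z' ≠ zz := by
        intro h
        have := hfinj j t' (by omega) (by omega)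
          (aux_puniq hdisj (h ▸ hz'j) hzzi)
        omega
      have hnodup : (c₁.support ++ c₂.support.tail).Nodup := by
        rw [← Walk.support_append, ← heq3]
        exact hc.support_nodup
      obtain ⟨-, -, hdisj'⟩ := List.nodup_append'.mp hnodup
      refine hdisj' c₁.start_mem_support ?_
      rw [c₂.support_eq_cons] at hz'
      rcases List.mem_cons.mp hz' with h | h
      · exact absurd h haz
      · exact h
    · by_cases hgt : j + x < t'
      · exfalso
        obtain ⟨zz, c₁, c₂, heq3, hzz, -⟩ := aux_firstHit c (fun y => y = z) ⟨z, hz, rfl⟩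
        have hzzi : zz ∈ (p (f t')).support := by rw [hzz]; exact hzi
        have hwinc₁ : ∀ z' ∈ c₁.support, ∀ i, z' ∈ (p i).support →
            ∃ m, lo ≤ m ∧ m ≤ hi ∧ i = f m := by
          intro z' hz' i hzi'
          exact hwinc z' (by rw [heq3]; exact (Walk.mem_support_append_iff _ _).mpr (Or.inl hz')) i hzi'
        obtain ⟨z', hz', hz'jx⟩ :=
          aux_ivt hdisj hR hfinj hfadj hdeg hhi hsane c₁.length c₁ le_rfl (γ := j + x) ha' hzzi
            (by omega) (by omega) ht'1 ht'2 (by omega) (by omega) hwinc₁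
        have hz'b : z' = b' := hfirst z'
          (hsupc z' (by rw [heq3]; exact (Walk.mem_support_append_iff _ _).mpr (Or.inl hz')))
          hz'jx
        subst hz'b
        have hbz : z' ≠ zz := by
          intro h
          have := hfinj (j + x) t' (by omega) (by omega)
            (aux_puniq hdisj (h ▸ hz'jx) hzzi)
          omega
        have hnodup : (c₁.support ++ c₂.support.tail).Nodup := by
          rw [← Walk.support_append, ← heq3]
          exact hc.support_nodup
        obtain ⟨-, -, hdisj'⟩ := List.nodup_append'.mp hnodup
        refine hdisj' hz' ?_
        have hbm : z' ∈ c₂.support := c₂.end_mem_support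
        rw [c₂.support_eq_cons] at hbm
        rcases List.mem_cons.mp hbm with h | h
        · exact absurd h hbz
        · exact h
      · exact ⟨t' - j, by omega, by rw [show j + (t' - j) = t' from by omega]⟩
  · rintro ⟨m, hm, rfl⟩
    exact aux_ivt hdisj hR hfinj hfadj hdeg hhi hsane c.length c le_rfl ha' hb'
      (by omega) (by omega) (by omega) (by omega) (by omega) (by omega) hwinc

end Main

/-- Given vertex-disjoint part-paths in a connected graph `G` of diameter `D`,
and a simple path `f₀, …, f_ℓ` (`ℓ ≥ 9`) in the contraction graph `R` all of
whose vertices have `R`-degree at most 2, there is a simple path `w` in `G` of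
hop-length at most `D` whose projection to `R` is supported on `f` and which
intersects exactly `x + 1` part-paths (`x = 3⌈ℓ/9⌉ - 1`), consecutive
along `f`. -/
theorem low_degree_path_crossing {V : Type*} [Fintype V] [DecidableEq V]
    (G : SimpleGraph V) (hconn : G.Connected)
    (D : ℕ) (hdiam : ∀ u v, G.dist u v ≤ D)
    (k : ℕ) (s t : Fin k → V) (p : ∀ i, G.Walk (s i) (t i))
    (hpath : ∀ i, (p i).IsPath)
    (hdisj : ∀ i j, i ≠ j → ∀ v ∈ (p i).support, v ∉ (p j).support)
    (R : SimpleGraph (Fin k))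
    (hR : ∀ i j, R.Adj i j ↔ i ≠ j ∧ ∃ (a b : V) (w : G.Walk a b),
      a ∈ (p i).support ∧ b ∈ (p j).support ∧
      ∀ v ∈ w.support, v ≠ a → v ≠ b → ∀ y, v ∉ (p y).support)
    (ℓ : ℕ) (hℓ : 9 ≤ ℓ) (f : ℕ → Fin k)
    (hfinj : ∀ i j, i ≤ ℓ → j ≤ ℓ → f i = f j → i = j)
    (hfadj : ∀ i, i < ℓ → R.Adj (f i) (f (i + 1)))
    (hdeg : ∀ i, i ≤ ℓ → {j | R.Adj (f i) j}.ncard ≤ 2)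
    (x : ℕ) (hx : x = 3 * ((ℓ + 8) / 9) - 1) :
    ∃ j, j + x ≤ ℓ ∧ ∃ (a b : V) (w : G.Walk a b), w.IsPath ∧ w.length ≤ D ∧
      ∀ i : Fin k, (∃ v ∈ w.support, v ∈ (p i).support) ↔
        ∃ m ≤ x, i = f (j + m) := by
  classical
  have hdiv := Nat.div_add_mod (ℓ + 8) 9
  have hmod : (ℓ + 8) % 9 < 9 := Nat.mod_lt _ (by norm_num)
  have hx2 : 2 ≤ x := by omega
  have h2x : x + x ≤ ℓ := by omega
  obtain ⟨w0, hw0⟩ := hconn.exists_walk_length_eq_dist (s (f x)) (s (f (x + x)))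
  set q := w0.bypass with hqdef
  have hqp : q.IsPath := w0.bypass_isPath
  have hqlen : q.length ≤ D :=
    le_trans (Walk.length_bypass_le w0) (by rw [hw0]; exact hdiam _ _)
  have hqu : s (f x) ∈ (p (f x)).support := (p (f x)).start_mem_support
  have hqv : s (f (x + x)) ∈ (p (f (x + x))).support := (p (f (x + x))).start_mem_support
  set Bad : V → Prop := fun z => z ∈ (p (f 0)).support ∨ z ∈ (p (f ℓ)).support ∨
    ∃ i, z ∈ (p i).support ∧ ∀ t', t' ≤ ℓ → i ≠ f t' with hBad
  by_cases hbad : ∃ z ∈ q.support, Bad z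
  · -- the walk meets a bad vertex; clip to the prefix before the first one
    obtain ⟨z₀, q₁, q₂, heq, hz₀bad, hfirstb⟩ := aux_firstHit q Bad hbad
    have hq₁p : q₁.IsPath := by
      rw [heq] at hqp
      exact hqp.of_append_left
    have hq₁len : q₁.length ≤ D := by
      have h := congrArg Walk.length heq
      rw [Walk.length_append] at h
      omega
    have hcore : ∀ z ∈ q₁.support, ∀ i, z ∈ (p i).support →
        (∃ m, 0 < m ∧ m < ℓ ∧ i = f m) ∨ z = z₀ := by
      intro z hz i hzi
      by_cases hzb : Bad z
      · exact Or.inr (hfirstb z hz hzb)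
      · left
        rw [hBad] at hzb
        have hnb0 : z ∉ (p (f 0)).support := fun h => hzb (Or.inl h)
        have hnbℓ : z ∉ (p (f ℓ)).support := fun h => hzb (Or.inr (Or.inl h))
        have hnboff : ∃ t', t' ≤ ℓ ∧ i = f t' := by
          by_contra hcon
          push_neg at hcon
          exact hzb (Or.inr (Or.inr ⟨i, hzi, fun t' ht' => hcon t' ht'⟩))
        obtain ⟨t', ht'ℓ, ht'eq⟩ := hnboff
        refine ⟨t', ?_, ?_, ht'eq⟩
        · rcases Nat.eq_zero_or_pos t' with rfl | h
          · exact absurd (ht'eq ▸ hzi) hnb0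
          · exact h
        · rcases eq_or_lt_of_le ht'ℓ with rfl | h
          · exact absurd (ht'eq ▸ hzi) hnbℓ
          · exact h
    have hz₀q₁ : z₀ ∈ q₁.support := q₁.end_mem_support
    rcases hz₀bad with h0 | hℓ0 | ⟨i₀, hz₀i, hoffi⟩
    · -- first bad vertex is on p (f 0) : cross the window [0, x] going backwards
      have hwinr : ∀ z ∈ q₁.reverse.support, ∀ i, z ∈ (p i).support →
          ∃ m, 0 ≤ m ∧ m ≤ ℓ - 1 ∧ i = f m := by
        intro z hz i hzi
        rw [Walk.support_reverse, List.mem_reverse] at hz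
        rcases hcore z hz i hzi with ⟨m, h1, h2, h3⟩ | rfl
        · exact ⟨m, by omega, by omega, h3⟩
        · exact ⟨0, le_rfl, by omega, aux_puniq hdisj hzi h0⟩
      obtain ⟨a, b, w', hp', hlen', hiff⟩ :=
        aux_cross hdisj hR hfinj hfadj hdeg (lo := 0) (hi := ℓ - 1) (by omega)
          (Or.inr (by omega)) q₁.reverse hq₁p.reverse (α := 0) (β := x) (j := 0) (x := x)
          h0 hqu (by omega) (by omega) (by omega) (by omega) (by omega) (by omega) hwinr
      refine ⟨0, by omega, a, b, w', hp', ?_, hiff⟩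
      rw [Walk.length_reverse] at hlen'
      omega
    · -- first bad vertex is on p (f ℓ) : cross the window [ℓ - x, ℓ]
      have hwin : ∀ z ∈ q₁.support, ∀ i, z ∈ (p i).support →
          ∃ m, 1 ≤ m ∧ m ≤ ℓ ∧ i = f m := by
        intro z hz i hzi
        rcases hcore z hz i hzi with ⟨m, h1, h2, h3⟩ | rfl
        · exact ⟨m, by omega, by omega, h3⟩
        · exact ⟨ℓ, by omega, le_rfl, aux_puniq hdisj hzi hℓ0⟩
      obtain ⟨a, b, w', hp', hlen', hiff⟩ :=
        aux_cross hdisj hR hfinj hfadj hdeg (lo := 1) (hi := ℓ) le_rfl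
          (Or.inl one_pos) q₁ hq₁p (α := x) (β := ℓ) (j := ℓ - x) (x := x)
          hqu hℓ0 (by omega) (by omega) (by omega) (by omega) (by omega) (by omega) hwin
      exact ⟨ℓ - x, by omega, a, b, w', hp', by omega, hiff⟩
    · -- first bad vertex is on an off-path part : impossible
      exact absurd (aux_nooff hdisj hR hfinj hfadj hdeg z₀ i₀ hz₀i hoffi q₁.length q₁
        le_rfl hqu (by omega) (by omega) hcore hz₀q₁) not_false
  · -- no bad vertices : cross the window [x, 2x]
    push_neg at hbad
    have hwin : ∀ z ∈ q.support, ∀ i, z ∈ (p i).support →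
        ∃ m, 1 ≤ m ∧ m ≤ ℓ - 1 ∧ i = f m := by
      intro z hz i hzi
      have hnb := hbad z hz
      rw [hBad] at hnb
      have hnb0 : z ∉ (p (f 0)).support := fun h => hnb (Or.inl h)
      have hnbℓ : z ∉ (p (f ℓ)).support := fun h => hnb (Or.inr (Or.inl h))
      have hnboff : ∃ t', t' ≤ ℓ ∧ i = f t' := by
        by_contra hcon
        push_neg at hcon
        exact hnb (Or.inr (Or.inr ⟨i, hzi, fun t' ht' => hcon t' ht'⟩))
      obtain ⟨t', ht'ℓ, ht'eq⟩ := hnboff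
      refine ⟨t', ?_, ?_, ht'eq⟩
      · rcases Nat.eq_zero_or_pos t' with rfl | h
        · exact absurd (ht'eq ▸ hzi) hnb0
        · exact h
      · rcases eq_or_lt_of_le ht'ℓ with rfl | h
        · exact absurd (ht'eq ▸ hzi) hnbℓ
        · omega
    have h2xlt : x + x < ℓ := by
      rcases eq_or_lt_of_le h2x with hq2 | h
      · exfalso
        apply hbad (s (f (x + x))) q.end_mem_support
        rw [hBad]
        exact Or.inr (Or.inl (show s (f (x + x)) ∈ (p (f ℓ)).support by rw [← hq2]; exact hqv))
      · exact h
    obtain ⟨a, b, w', hp', hlen', hiff⟩ :=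
      aux_cross hdisj hR hfinj hfadj hdeg (lo := 1) (hi := ℓ - 1) (by omega)
        (Or.inl one_pos) q hqp (α := x) (β := x + x) (j := x) (x := x)
        hqu hqv (by omega) (by omega) (by omega) (by omega) le_rfl le_rfl hwin
    exact ⟨x, by omega, a, b, w', hp', by omega, hiff⟩
end

section
/- For every always-correct CONGEST algorithm $\mathcal{A}$ for the MST problem and every graph $G$ of diameter $D \ge 3$ with $n \ge 3$ vertices, there exists a weight assignment on $G$ on which $\mathcal{A}$ requires at least $D/2 - 1$ rounds. Specifically: there exist weighted instances $I$ on $G$ and $I'$ on $G' = G + (s,t)$ (for $s,t$ at distance $D$) that agree on all common edges, such that some edge $e = (u,v)$ at distance at least $D/2 - 1$ from both $s$ and $t$ is in every MST of $(G,I)$ but in no MST of $(G',I')$; hence $v$ cannot decide membership of $e$ in the MST within $D/2 - 2$ rounds. -/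
open scoped Classical

open SimpleGraph

section Aux

variable {V : Type*}

/-- Every non-trivial walk has a first edge incident to its start. -/
lemma aux_exists_first_edge {W : SimpleGraph V} {a y : V} (w : W.Walk a y)
    (h : w.length ≠ 0) : ∃ z, s(a, z) ∈ w.edges := by
  cases w with
  | nil => simp at h
  | cons h' q => exact ⟨_, by rw [SimpleGraph.Walk.edges_cons]; exact List.mem_cons_self⟩

/-- No cycle can have all of its edges among the edges of a path. -/
lemma aux_no_cycle_in_path {W X : SimpleGraph V} {a b : V} (q : W.Walk a b) :
    q.IsPath → ∀ {u : V} (c : X.Walk u u), c.IsCycle → ¬(∀ e ∈ c.edges, e ∈ q.edges) := by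
  induction q with
  | nil =>
    intro _ u c hc hall
    have h3 := hc.three_le_length
    have hne : c.edges ≠ [] := by
      intro h
      have := c.length_edges
      rw [h] at this
      simp at this
      omega
    obtain ⟨e, he⟩ := List.exists_mem_of_ne_nil _ hne
    simpa using hall e he
  | @cons a x b h q ih =>
    intro hq u c hc hall
    rw [SimpleGraph.Walk.cons_isPath_iff] at hq
    have hforce : ∀ z, s(a, z) ∈ (SimpleGraph.Walk.cons h q).edges → z = x := by
      intro z hz
      rw [SimpleGraph.Walk.edges_cons] at hz
      rcases List.mem_cons.mp hz with h1 | h1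
      · exact (Sym2.congr_right.mp h1)
      · exact absurd (SimpleGraph.Walk.fst_mem_support_of_mem_edges q h1) hq.2
    by_cases hax : a ∈ c.support
    · obtain ⟨c₂, hc₂, hlen, hall₂⟩ :
        ∃ c₂ : X.Walk a a, c₂.IsCycle ∧ 3 ≤ c₂.length ∧
          ∀ e ∈ c₂.edges, e ∈ (SimpleGraph.Walk.cons h q).edges :=
        ⟨c.rotate a hax, hc.rotate hax, (hc.rotate hax).three_le_length,
          fun e he => hall e ((c.rotate_edges a hax).mem_iff.mp he)⟩
      cases c₂ with
      | nil => simp at hlen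
      | @cons _ y _ hadj r =>
        rw [SimpleGraph.Walk.cons_isCycle_iff] at hc₂
        obtain ⟨hr, hne⟩ := hc₂
        have h1 : s(a, y) ∈ (SimpleGraph.Walk.cons h q).edges := hall₂ _ (by simp)
        have hyx : y = x := hforce y h1
        have hrlen : r.length ≠ 0 := by
          simp only [SimpleGraph.Walk.length_cons] at hlen; omega
        obtain ⟨z, hz⟩ := aux_exists_first_edge r.reverse (by simpa using hrlen)
        rw [SimpleGraph.Walk.edges_reverse, List.mem_reverse] at hz
        have hz' : s(a, z) ∈ (SimpleGraph.Walk.cons h q).edges :=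
          hall₂ _ (by rw [SimpleGraph.Walk.edges_cons]; exact List.mem_cons_of_mem _ hz)
        have hzx : z = x := hforce z hz'
        rw [hzx, ← hyx] at hz
        exact hne hz
    · refine ih hq.1 c hc (fun e he => ?_)
      have h1 := hall e he
      rw [SimpleGraph.Walk.edges_cons] at h1
      rcases List.mem_cons.mp h1 with h1 | h1
      · rw [h1] at he
        exact absurd (SimpleGraph.Walk.fst_mem_support_of_mem_edges c he) hax
      · exact h1

lemma aux_getVert_mem_support {G : SimpleGraph V} {a b : V} (p : G.Walk a b) (i : ℕ) :
    p.getVert i ∈ p.support := by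
  induction p generalizing i with
  | nil => cases i <;> simp [SimpleGraph.Walk.getVert]
  | cons h q ih =>
    cases i with
    | zero => simp [SimpleGraph.Walk.getVert]
    | succ n =>
      rw [SimpleGraph.Walk.getVert_cons_succ]
      simp only [SimpleGraph.Walk.support_cons, List.mem_cons]
      exact Or.inr (ih n)

lemma aux_dist_getVert_le {G : SimpleGraph V} (hconn : G.Connected) {a b : V}
    (p : G.Walk a b) (i : ℕ) : G.dist a (p.getVert i) ≤ i := by
  induction p generalizing i with
  | nil =>
    cases i <;> simp [SimpleGraph.Walk.getVert, SimpleGraph.dist_self]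
  | @cons a c b h q ih =>
    cases i with
    | zero => simp [SimpleGraph.Walk.getVert_zero, SimpleGraph.dist_self]
    | succ n =>
      rw [SimpleGraph.Walk.getVert_cons_succ]
      calc G.dist a (q.getVert n) ≤ G.dist a c + G.dist c (q.getVert n) :=
            hconn.dist_triangle
        _ ≤ 1 + n := by
            have h1 : G.dist a c = 1 := SimpleGraph.dist_eq_one_iff_adj.mpr h
            have h2 := ih n
            omega
        _ = n + 1 := by omega

/-- Walks in `G` stay connected after deleting a non-bridge edge. -/
lemma aux_reachable_delete {G : SimpleGraph V} {x y : V}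
    (hr : (G \ SimpleGraph.fromEdgeSet {s(x, y)}).Reachable x y) {a b : V}
    (w : G.Walk a b) : (G \ SimpleGraph.fromEdgeSet {s(x, y)}).Reachable a b := by
  induction w with
  | nil => exact SimpleGraph.Reachable.refl _
  | @cons a c b hadj q ihq =>
    refine SimpleGraph.Reachable.trans ?_ ihq
    by_cases he : s(a, c) = s(x, y)
    · rw [Sym2.eq_iff] at he
      rcases he with ⟨rfl, rfl⟩ | ⟨rfl, rfl⟩
      · exact hr
      · exact hr.symm
    · refine SimpleGraph.Adj.reachable ?_
      rw [SimpleGraph.sdiff_adj]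
      refine ⟨hadj, ?_⟩
      rw [SimpleGraph.fromEdgeSet_adj]
      rintro ⟨h1, -⟩
      exact he h1

end Aux


section Aux2

variable {V : Type*} [Fintype V] [DecidableEq V]

/-- Any subgraph `H` of a connected graph `G` that contains no cycle (of any graph)
can be extended to a spanning tree of `G`. -/
lemma aux_exists_spanning_tree_above :
    ∀ (N : ℕ) (G H : SimpleGraph V), G.edgeSet.ncard ≤ N → H ≤ G → G.Connected →
    (∀ (F : SimpleGraph V) (u : V) (c : F.Walk u u), c.IsCycle → ∃ e ∈ c.edges, e ∉ H.edgeSet) →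
    ∃ T : SimpleGraph V, H ≤ T ∧ T ≤ G ∧ T.Connected ∧ T.IsAcyclic := by
  intro N
  induction N with
  | zero =>
    intro G H hcard hHG hconn hH
    refine ⟨G, hHG, le_refl G, hconn, ?_⟩
    intro v c hcyc
    have h3 := hcyc.three_le_length
    have hne : c.edges ≠ [] := by
      intro h
      have := c.length_edges
      rw [h] at this
      simp at this
      omega
    obtain ⟨e, he⟩ := List.exists_mem_of_ne_nil _ hne
    have he1 : e ∈ G.edgeSet := c.edges_subset_edgeSet he
    have hpos := (Set.ncard_pos G.edgeSet.toFinite).mpr ⟨e, he1⟩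
    omega
  | succ n ih =>
    intro G H hcard hHG hconn hH
    by_cases hG : G.IsAcyclic
    · exact ⟨G, hHG, le_refl G, hconn, hG⟩
    · simp only [SimpleGraph.IsAcyclic] at hG
      push_neg at hG
      obtain ⟨v, c, hc⟩ := hG
      obtain ⟨f, hfc, hfH⟩ := hH G v c hc
      have hfG : f ∈ G.edgeSet := c.edges_subset_edgeSet hfc
      induction f using Sym2.ind with
      | _ x y =>
      have hxy : G.Adj x y := hfG
      have hnb : ¬G.IsBridge s(x, y) := by
        rw [SimpleGraph.isBridge_iff_mem_and_forall_cycle_notMem hfG]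
        push_neg
        exact ⟨v, c, hc, hfc⟩
      have hreach : (G \ SimpleGraph.fromEdgeSet {s(x, y)}).Reachable x y := by
        by_contra hr
        exact hnb (SimpleGraph.isBridge_iff.mpr hr)
      set G₂ := G \ SimpleGraph.fromEdgeSet {s(x, y)} with hG₂def
      have hG₂edge : G₂.edgeSet = G.edgeSet \ {s(x, y)} := by
        rw [hG₂def, SimpleGraph.edgeSet_sdiff, SimpleGraph.edgeSet_fromEdgeSet,
          SimpleGraph.edgeSet_sdiff_sdiff_isDiag]
      have hconn₂ : G₂.Connected := by
        have hne := hconn.nonempty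
        refine ⟨fun a b => ?_⟩
        obtain ⟨w⟩ := hconn.preconnected a b
        exact aux_reachable_delete hreach w
      have hHG₂ : H ≤ G₂ := by
        rw [← SimpleGraph.edgeSet_subset_edgeSet] at hHG ⊢
        rw [hG₂edge]
        intro e he
        refine ⟨hHG he, ?_⟩
        intro h1
        rw [Set.mem_singleton_iff] at h1
        rw [h1] at he
        exact hfH he
      have hcard₂ : G₂.edgeSet.ncard ≤ n := by
        rw [hG₂edge, Set.ncard_diff_singleton_of_mem hfG]
        have hpos := (Set.ncard_pos G.edgeSet.toFinite).mpr ⟨_, hfG⟩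
        omega
      have hle₂ : G₂ ≤ G := sdiff_le
      obtain ⟨T, h1, h2, h3, h4⟩ := ih G₂ H hcard₂ hHG₂ hconn₂ hH
      exact ⟨T, h1, le_trans h2 hle₂, h3, h4⟩

lemma aux_sum_wt_eq (ET C : Finset (Sym2 V)) (e0 : Sym2 V) (w : Sym2 V → ℕ)
    (hw : ∀ e ∈ ET, w e = if e ∈ C then (if e = e0 then 1 else 0) else 2) :
    ∑ e ∈ ET, w e =
      2 * (ET.card - (ET ∩ C).card) + (if e0 ∈ ET ∩ C then 1 else 0) := by
  have hsum : ∑ e ∈ ET, w e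
      = ∑ e ∈ ET, (if e ∈ C then (if e = e0 then 1 else 0) else 2) :=
    Finset.sum_congr rfl hw
  have h3 : ∑ e ∈ ET, (if e ∈ C then (if e = e0 then 1 else 0) else 2)
      = ∑ e ∈ ET \ C, (if e ∈ C then (if e = e0 then 1 else 0) else 2)
        + ∑ e ∈ ET ∩ C, (if e ∈ C then (if e = e0 then 1 else 0) else 2) := by
    rw [← Finset.sum_union (Finset.disjoint_sdiff_inter ET C), Finset.sdiff_union_inter]
  have h1 : ∑ e ∈ ET \ C, (if e ∈ C then (if e = e0 then 1 else 0) else 2)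
      = 2 * (ET \ C).card := by
    rw [Finset.sum_congr rfl (fun e he => if_neg (Finset.mem_sdiff.mp he).2)]
    simp [mul_comm]
  have h2 : ∑ e ∈ ET ∩ C, (if e ∈ C then (if e = e0 then 1 else 0) else 2)
      = if e0 ∈ ET ∩ C then 1 else 0 := by
    rw [Finset.sum_congr rfl (fun e he => if_pos (Finset.mem_inter.mp he).2)]
    exact Finset.sum_ite_eq' (ET ∩ C) e0 (fun _ => 1)
  have h4 : (ET \ C).card + (ET ∩ C).card = ET.card :=
    Finset.card_sdiff_add_card_inter ET C
  rw [hsum, h3, h1, h2]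
  have : (ET \ C).card = ET.card - (ET ∩ C).card := by omega
  rw [this]

end Aux2

/-- Combinatorial core of the `Ω(D)` universal MST lower bound: on any
connected graph `G` of diameter `D ≥ 3` (with `n ≥ 3` vertices, `s, t` at
distance `D`), there are weights `wt` on `G` and `wt'` on `G' = G + (s,t)`
agreeing on all common edges, and an edge `(u,v)` with `v` at distance at
least `D/2 - 1` from both `s` and `t`, such that `(u,v)` is in every MST of
`(G, wt)` but in no MST of `(G', wt')`. -/
theorem mst_diameter_lower_bound_core {V : Type*} [Fintype V] [DecidableEq V]
    (G : SimpleGraph V) (hcard : 3 ≤ Fintype.card V) (hconn : G.Connected)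
    (D : ℕ) (hD : 3 ≤ D) (s t : V) (hst : G.dist s t = D)
    (hdiam : ∀ u v, G.dist u v ≤ D) :
    ∃ (wt wt' : Sym2 V → ℕ) (u v : V),
      (∀ e ∈ G.edgeSet, wt e = wt' e) ∧
      G.Adj u v ∧
      D ≤ 2 * G.dist v s + 2 ∧ D ≤ 2 * G.dist v t + 2 ∧
      (∀ T : SimpleGraph V, T ≤ G → T.Connected → T.IsAcyclic →
        (∀ T' : SimpleGraph V, T' ≤ G → T'.Connected → T'.IsAcyclic →
          ∑ e ∈ Finset.univ.filter (fun e => e ∈ T.edgeSet), wt e ≤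
            ∑ e ∈ Finset.univ.filter (fun e => e ∈ T'.edgeSet), wt e) →
        T.Adj u v) ∧
      (∀ T : SimpleGraph V,
        T ≤ G ⊔ SimpleGraph.fromEdgeSet {s(s, t)} → T.Connected → T.IsAcyclic →
        (∀ T' : SimpleGraph V, T' ≤ G ⊔ SimpleGraph.fromEdgeSet {s(s, t)} →
          T'.Connected → T'.IsAcyclic →
          ∑ e ∈ Finset.univ.filter (fun e => e ∈ T.edgeSet), wt' e ≤
            ∑ e ∈ Finset.univ.filter (fun e => e ∈ T'.edgeSet), wt' e) →
        ¬ T.Adj u v) := by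
  -- set up a shortest path `p₀` from `s` to `t`
  obtain ⟨p', hp'len⟩ := hconn.exists_walk_length_eq_dist s t
  set p₀ := p'.bypass with hp₀def
  have hp₀ : p₀.IsPath := by rw [hp₀def]; exact p'.bypass_isPath
  have hlen : p₀.length = D := by
    have h1 := p'.length_bypass_le
    have h2 := G.dist_le p₀
    rw [hst] at h2
    rw [hst] at hp'len
    rw [hp₀def] at h2 ⊢
    omega
  set k := (D + 1) / 2 with hkdef
  have hkD : k ≤ D := by omega
  set v := p₀.getVert k with hvdef
  have hv : v ∈ p₀.support := aux_getVert_mem_support p₀ k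
  have hdsv : G.dist s v ≤ k := aux_dist_getVert_le hconn p₀ k
  have hdtv : G.dist t v ≤ D - k := by
    have h1 := aux_dist_getVert_le hconn p₀.reverse (D - k)
    rw [SimpleGraph.Walk.getVert_reverse] at h1
    rw [hlen] at h1
    have h2 : D - (D - k) = k := by omega
    rw [h2] at h1
    exact h1
  have htri : D ≤ G.dist s v + G.dist v t := by
    have h1 := hconn.dist_triangle (u := s) (v := v) (w := t)
    rw [hst] at h1
    exact h1
  have hcmvt : G.dist v t = G.dist t v := SimpleGraph.dist_comm
  have hgesv : k ≤ G.dist s v := by omega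
  have hvns : v ≠ s := by
    intro h
    rw [h, SimpleGraph.dist_self] at hgesv
    omega
  -- split the path at `v`
  set p1 := p₀.takeUntil v hv with hp1def
  set p2 := p₀.dropUntil v hv with hp2def
  have hspec : p1.append p2 = p₀ := p₀.take_spec hv
  have hp1 : p1.IsPath := hp₀.takeUntil hv
  have hp2 : p2.IsPath := hp₀.dropUntil hv
  obtain ⟨u, hadj, w, hw⟩ := SimpleGraph.Walk.exists_eq_cons_of_ne hvns p1.reverse
  have hp1eq : p1 = (SimpleGraph.Walk.cons hadj w).reverse := by
    rw [← hw, SimpleGraph.Walk.reverse_reverse]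
  set e0 : Sym2 V := s(u, v) with he0def
  have he0swap : e0 = s(v, u) := Sym2.eq_swap.symm
  have hp1edges : ∀ e, e ∈ p1.edges ↔ (e = s(v, u) ∨ e ∈ w.edges) := by
    intro e
    rw [hp1eq, SimpleGraph.Walk.edges_reverse, List.mem_reverse,
      SimpleGraph.Walk.edges_cons, List.mem_cons]
  have hedges_p : p₀.edges = p1.edges ++ p2.edges := by
    have h1 := SimpleGraph.Walk.edges_append p1 p2
    rw [hspec] at h1
    exact h1
  have he0p1 : e0 ∈ p1.edges := (hp1edges e0).mpr (Or.inl he0swap)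
  have he0p : e0 ∈ p₀.edges := by
    rw [hedges_p]; exact List.mem_append_left _ he0p1
  have hadjG : G.Adj u v := hadj.symm
  have hnodupE : p₀.edges.Nodup := hp₀.isTrail.edges_nodup
  have hnd : (p1.edges ++ p2.edges).Nodup := by rw [← hedges_p]; exact hnodupE
  obtain ⟨hnd1, hnd2, hdisj⟩ := List.nodup_append.mp hnd
  have he0w : e0 ∉ w.edges := by
    have h1 : p1.edges.Nodup := hnd1
    rw [hp1eq, SimpleGraph.Walk.edges_reverse, List.nodup_reverse,
      SimpleGraph.Walk.edges_cons, List.nodup_cons] at h1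
    rw [he0swap]
    exact h1.1
  have he0p2 : e0 ∉ p2.edges := fun h => hdisj e0 he0p1 e0 h rfl
  -- the extra edge
  set st : Sym2 V := s(s, t) with hstdef
  have hsnet : s ≠ t := by
    intro h
    rw [h, SimpleGraph.dist_self] at hst
    omega
  have hstG : st ∉ G.edgeSet := by
    intro h
    rw [hstdef, SimpleGraph.mem_edgeSet] at h
    have := SimpleGraph.dist_eq_one_iff_adj.mpr h
    omega
  set G' := G ⊔ SimpleGraph.fromEdgeSet {st} with hG'def
  have hGle : G ≤ G' := le_sup_left
  have hG'ts : G'.Adj t s := by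
    rw [hG'def, SimpleGraph.sup_adj, SimpleGraph.fromEdgeSet_adj]
    refine Or.inr ⟨?_, fun h => hsnet h.symm⟩
    rw [hstdef, Set.mem_singleton_iff]
    exact Sym2.eq_swap
  -- the detour path `Q` and cycle `c` in `G'`
  have hwG' : ∀ e ∈ w.edges, e ∈ G'.edgeSet :=
    fun e he => (SimpleGraph.edgeSet_mono hGle) (w.edges_subset_edgeSet he)
  have hp2G' : ∀ e ∈ p2.edges, e ∈ G'.edgeSet :=
    fun e he => (SimpleGraph.edgeSet_mono hGle) (p2.edges_subset_edgeSet he)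
  set Q : G'.Walk v u :=
    (p2.transfer G' hp2G').append
      (SimpleGraph.Walk.cons hG'ts (w.transfer G' hwG').reverse) with hQdef
  have hts_swap : s(t, s) = st := by rw [hstdef]; exact Sym2.eq_swap
  have hQedges : ∀ e, e ∈ Q.edges ↔ (e ∈ p2.edges ∨ e = st ∨ e ∈ w.edges) := by
    intro e
    rw [hQdef, SimpleGraph.Walk.edges_append, SimpleGraph.Walk.edges_cons,
      SimpleGraph.Walk.edges_reverse, SimpleGraph.Walk.edges_transfer,
      SimpleGraph.Walk.edges_transfer, List.mem_append, List.mem_cons,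
      List.mem_reverse, hts_swap]
  have hQsupport : Q.support = p2.support ++ w.support.reverse := by
    rw [hQdef, SimpleGraph.Walk.support_append, SimpleGraph.Walk.support_cons,
      SimpleGraph.Walk.support_reverse, SimpleGraph.Walk.support_transfer,
      SimpleGraph.Walk.support_transfer, List.tail_cons]
  have hPsup : p₀.support = (w.support.reverse ++ [v]) ++ p2.support.tail := by
    have h1 := SimpleGraph.Walk.support_append p1 p2
    rw [hspec] at h1
    rw [h1, hp1eq, SimpleGraph.Walk.support_reverse, SimpleGraph.Walk.support_cons,
      List.reverse_cons]
  have hQnodup : Q.support.Nodup := by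
    have hnods : ((w.support.reverse ++ [v]) ++ p2.support.tail).Nodup := by
      rw [← hPsup]; exact hp₀.support_nodup
    have hperm : ((w.support.reverse ++ [v]) ++ p2.support.tail).Perm
        ((v :: p2.support.tail) ++ w.support.reverse) := by
      have h1 : (w.support.reverse ++ [v]) ++ p2.support.tail
          = w.support.reverse ++ (v :: p2.support.tail) := by simp
      rw [h1]
      exact List.perm_append_comm
    rw [hQsupport, SimpleGraph.Walk.support_eq_cons p2]
    exact hperm.nodup_iff.mp hnods
  have hQpath : Q.IsPath := SimpleGraph.Walk.IsPath.mk' hQnodup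
  have he0G : e0 ∈ G.edgeSet := G.mem_edgeSet.mpr hadjG
  have he0st : e0 ≠ st := fun h => hstG (h ▸ he0G)
  have he0Q : e0 ∉ Q.edges := by
    rw [hQedges]
    push_neg
    exact ⟨he0p2, he0st, he0w⟩
  have hG'uv : G'.Adj u v := hGle hadjG
  set c : G'.Walk u u := SimpleGraph.Walk.cons hG'uv Q with hcdef
  have hccyc : c.IsCycle := (SimpleGraph.Walk.cons_isCycle_iff Q hG'uv).mpr ⟨hQpath, he0Q⟩
  have hcedges : ∀ e, e ∈ c.edges ↔ (e = e0 ∨ e ∈ Q.edges) := by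
    intro e
    rw [hcdef, SimpleGraph.Walk.edges_cons, List.mem_cons, he0def]
  -- finsets of edges
  set P : Finset (Sym2 V) := p₀.edges.toFinset with hPdef
  have hPcard : P.card = D := by
    rw [hPdef, List.toFinset_card_of_nodup hnodupE, SimpleGraph.Walk.length_edges, hlen]
  have hstP : st ∉ P := fun h => hstG (p₀.edges_subset_edgeSet (List.mem_toFinset.mp h))
  set C : Finset (Sym2 V) := insert st P with hCdef
  have hCcard : C.card = D + 1 := by
    rw [hCdef, Finset.card_insert_of_notMem hstP, hPcard]
  have he0P : e0 ∈ P := List.mem_toFinset.mpr he0p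
  have he0C : e0 ∈ C := Finset.mem_insert_of_mem he0P
  -- the weights
  set wt : Sym2 V → ℕ := fun e => if e ∈ P then (if e = e0 then 1 else 0) else 2 with hwtdef
  set wt' : Sym2 V → ℕ := fun e => if e = st then 0 else wt e with hwt'def
  have hagree : ∀ e ∈ G.edgeSet, wt e = wt' e := by
    intro e he
    have h1 : e ≠ st := fun h => hstG (h ▸ he)
    simp only [hwt'def]
    rw [if_neg h1]
  have hwt'C : ∀ e, wt' e = if e ∈ C then (if e = e0 then 1 else 0) else 2 := by
    intro e
    by_cases h1 : e = st
    · have hl : wt' e = 0 := by simp only [hwt'def]; rw [if_pos h1]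
      have hC : e ∈ C := by rw [h1, hCdef]; exact Finset.mem_insert_self st P
      have hne0 : e ≠ e0 := by rw [h1]; exact fun h => he0st h.symm
      rw [hl, if_pos hC, if_neg hne0]
    · have hl : wt' e = wt e := by simp only [hwt'def]; rw [if_neg h1]
      rw [hl]
      by_cases h2 : e ∈ P
      · have hC : e ∈ C := by rw [hCdef]; exact Finset.mem_insert_of_mem h2
        have hwe : wt e = if e = e0 then 1 else 0 := by simp only [hwtdef]; rw [if_pos h2]
        rw [hwe, if_pos hC]
      · have hC : e ∉ C := by
          rw [hCdef, Finset.mem_insert]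
          push_neg
          exact ⟨h1, h2⟩
        have hwe : wt e = 2 := by simp only [hwtdef]; rw [if_neg h2]
        rw [hwe, if_neg hC]
  -- spanning tree of `G` containing all edges of `p₀`
  have hHGle : SimpleGraph.fromEdgeSet {e | e ∈ p₀.edges} ≤ G := by
    have h1 := SimpleGraph.fromEdgeSet_mono
      (show {e | e ∈ p₀.edges} ⊆ G.edgeSet from fun e he => p₀.edges_subset_edgeSet he)
    rwa [SimpleGraph.fromEdgeSet_edgeSet] at h1
  have hHGcyc : ∀ (F : SimpleGraph V) (u' : V) (c' : F.Walk u' u'), c'.IsCycle →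
      ∃ e ∈ c'.edges, e ∉ (SimpleGraph.fromEdgeSet {e | e ∈ p₀.edges}).edgeSet := by
    intro F u' c' hc'
    by_contra hcon
    push_neg at hcon
    refine aux_no_cycle_in_path p₀ hp₀ c' hc' (fun e he => ?_)
    have h1 := hcon e he
    rw [SimpleGraph.edgeSet_fromEdgeSet] at h1
    exact h1.1
  obtain ⟨T₀, hT₀H, hT₀G, hT₀conn, hT₀acyc⟩ :=
    aux_exists_spanning_tree_above G.edgeSet.ncard G _ le_rfl hHGle hconn hHGcyc
  have hPT₀ : ∀ e ∈ P, e ∈ T₀.edgeSet := by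
    intro e he
    refine SimpleGraph.edgeSet_mono hT₀H ?_
    rw [SimpleGraph.edgeSet_fromEdgeSet]
    have heG : e ∈ G.edgeSet := p₀.edges_subset_edgeSet (List.mem_toFinset.mp he)
    exact ⟨List.mem_toFinset.mp he, SimpleGraph.not_isDiag_of_mem_edgeSet _ heG⟩
  -- spanning tree of `G'` containing all edges of `Q`
  have hconn' : G'.Connected := SimpleGraph.Connected.mono hGle hconn
  have hHQle : SimpleGraph.fromEdgeSet {e | e ∈ Q.edges} ≤ G' := by
    have h1 := SimpleGraph.fromEdgeSet_mono
      (show {e | e ∈ Q.edges} ⊆ G'.edgeSet from fun e he => Q.edges_subset_edgeSet he)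
    rwa [SimpleGraph.fromEdgeSet_edgeSet] at h1
  have hHQcyc : ∀ (F : SimpleGraph V) (u' : V) (c' : F.Walk u' u'), c'.IsCycle →
      ∃ e ∈ c'.edges, e ∉ (SimpleGraph.fromEdgeSet {e | e ∈ Q.edges}).edgeSet := by
    intro F u' c' hc'
    by_contra hcon
    push_neg at hcon
    refine aux_no_cycle_in_path Q hQpath c' hc' (fun e he => ?_)
    have h1 := hcon e he
    rw [SimpleGraph.edgeSet_fromEdgeSet] at h1
    exact h1.1
  obtain ⟨T₁, hT₁H, hT₁G, hT₁conn, hT₁acyc⟩ :=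
    aux_exists_spanning_tree_above G'.edgeSet.ncard G' _ le_rfl hHQle hconn' hHQcyc
  have hQT₁ : ∀ e ∈ Q.edges, e ∈ T₁.edgeSet := by
    intro e he
    refine SimpleGraph.edgeSet_mono hT₁H ?_
    rw [SimpleGraph.edgeSet_fromEdgeSet]
    have heG : e ∈ G'.edgeSet := Q.edges_subset_edgeSet he
    exact ⟨he, SimpleGraph.not_isDiag_of_mem_edgeSet _ heG⟩
  -- membership helper
  have hmem : ∀ (S : SimpleGraph V) (e : Sym2 V),
      e ∈ Finset.univ.filter (fun e => e ∈ S.edgeSet) ↔ e ∈ S.edgeSet := by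
    intro S e
    simp
  have hcardtree : ∀ S : SimpleGraph V, S.Connected → S.IsAcyclic →
      (Finset.univ.filter (fun e => e ∈ S.edgeSet)).card + 1 = Fintype.card V := by
    intro S h1 h2
    have h3 : Finset.univ.filter (fun e => e ∈ S.edgeSet) = S.edgeFinset := by
      ext e
      simp [SimpleGraph.mem_edgeFinset]
    rw [h3]
    exact (⟨h1, h2⟩ : S.IsTree).card_edgeFinset
  refine ⟨wt, wt', u, v, hagree, hadjG, ?_, ?_, ?_, ?_⟩
  · have hcm : G.dist v s = G.dist s v := SimpleGraph.dist_comm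
    omega
  · omega
  · -- every MST of `(G, wt)` contains `e0`
    intro T hTG hTconn hTacyc hmin
    by_contra hne
    have he0T : e0 ∉ T.edgeSet := fun h => hne (T.mem_edgeSet.mp h)
    set ET := Finset.univ.filter (fun e => e ∈ T.edgeSet) with hETdef
    set ET₀ := Finset.univ.filter (fun e => e ∈ T₀.edgeSet) with hET₀def
    have hcardT : ET.card + 1 = Fintype.card V := hcardtree T hTconn hTacyc
    have hcardT₀ : ET₀.card + 1 = Fintype.card V := hcardtree T₀ hT₀conn hT₀acyc
    have hsum := aux_sum_wt_eq ET P e0 wt (fun e _ => rfl)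
    have hsum₀ := aux_sum_wt_eq ET₀ P e0 wt (fun e _ => rfl)
    have hsub1 : ET ∩ P ⊆ P.erase e0 := by
      intro x hx
      rw [Finset.mem_inter] at hx
      rw [Finset.mem_erase]
      refine ⟨?_, hx.2⟩
      intro hxe
      rw [hxe] at hx
      exact he0T ((hmem T e0).mp hx.1)
    have ha : (ET ∩ P).card ≤ D - 1 := by
      have h1 := Finset.card_le_card hsub1
      rw [Finset.card_erase_of_mem he0P, hPcard] at h1
      exact h1
    have hPsub : P ⊆ ET₀ := fun e he => (hmem T₀ e).mpr (hPT₀ e he)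
    have hint : ET₀ ∩ P = P := Finset.inter_eq_right.mpr hPsub
    have hDle : D ≤ ET₀.card := by
      rw [← hPcard]
      exact Finset.card_le_card hPsub
    have he0ET : e0 ∉ ET ∩ P :=
      fun h => he0T ((hmem T e0).mp (Finset.mem_inter.mp h).1)
    have he0ET₀ : e0 ∈ ET₀ ∩ P := by rw [hint]; exact he0P
    rw [if_neg he0ET] at hsum
    rw [if_pos he0ET₀] at hsum₀
    have hminv := hmin T₀ hT₀G hT₀conn hT₀acyc
    rw [← hET₀def] at hminv
    rw [hsum, hsum₀, hint, hPcard] at hminv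
    omega
  · -- no MST of `(G', wt')` contains `e0`
    intro T hTG hTconn hTacyc hmin hne
    have he0T : e0 ∈ T.edgeSet := T.mem_edgeSet.mpr hne
    set ET := Finset.univ.filter (fun e => e ∈ T.edgeSet) with hETdef
    set ET₁ := Finset.univ.filter (fun e => e ∈ T₁.edgeSet) with hET₁def
    have hcardT : ET.card + 1 = Fintype.card V := hcardtree T hTconn hTacyc
    have hcardT₁ : ET₁.card + 1 = Fintype.card V := hcardtree T₁ hT₁conn hT₁acyc
    have hcyc_no : ∀ S : SimpleGraph V, S.IsAcyclic →
        (∀ e ∈ Q.edges, e ∈ S.edgeSet) → e0 ∈ S.edgeSet → False := by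
      intro S hS hQS he0S
      have hsubc : ∀ e ∈ c.edges, e ∈ S.edgeSet := by
        intro e he
        rcases (hcedges e).mp he with h1 | h1
        · rw [h1]; exact he0S
        · exact hQS e h1
      exact hS (c.transfer S hsubc) (hccyc.transfer hsubc)
    have hQC : ∀ e ∈ Q.edges, e ∈ C := by
      intro e he
      rw [hQedges] at he
      rcases he with h1 | h1 | h1
      · refine Finset.mem_insert_of_mem (List.mem_toFinset.mpr ?_)
        rw [hedges_p]
        exact List.mem_append_right _ h1
      · rw [h1]; exact Finset.mem_insert_self st P
      · refine Finset.mem_insert_of_mem (List.mem_toFinset.mpr ?_)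
        rw [hedges_p]
        exact List.mem_append_left _ ((hp1edges e).mpr (Or.inr h1))
    have hfex : ∃ f ∈ C, f ∉ T.edgeSet := by
      by_contra hcon
      push_neg at hcon
      exact hcyc_no T hTacyc (fun e he => hcon e (hQC e he)) (hcon e0 he0C)
    obtain ⟨f, hfC, hfT⟩ := hfex
    have ha : (ET ∩ C).card ≤ D := by
      have hsub : ET ∩ C ⊆ C.erase f := by
        intro x hx
        rw [Finset.mem_inter] at hx
        rw [Finset.mem_erase]
        refine ⟨?_, hx.2⟩
        intro hxe
        rw [hxe] at hx
        exact hfT ((hmem T f).mp hx.1)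
      have h1 := Finset.card_le_card hsub
      rw [Finset.card_erase_of_mem hfC, hCcard] at h1
      omega
    have he0T₁ : e0 ∉ T₁.edgeSet := fun h => hcyc_no T₁ hT₁acyc hQT₁ h
    have hCQ : ∀ e ∈ C, e ≠ e0 → e ∈ T₁.edgeSet := by
      intro e heC hene
      refine hQT₁ e ?_
      rw [hQedges]
      rcases Finset.mem_insert.mp heC with h0 | heP
      · exact Or.inr (Or.inl h0)
      · have hep : e ∈ p₀.edges := List.mem_toFinset.mp heP
        rw [hedges_p, List.mem_append] at hep
        rcases hep with h1 | h1
        · rcases (hp1edges e).mp h1 with h2 | h2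
          · exact absurd (h2.trans he0swap.symm) hene
          · exact Or.inr (Or.inr h2)
        · exact Or.inl h1
    have hint : ET₁ ∩ C = C.erase e0 := by
      ext x
      rw [Finset.mem_inter, Finset.mem_erase]
      constructor
      · rintro ⟨h1, h2⟩
        refine ⟨?_, h2⟩
        intro hxe
        rw [hxe] at h1
        exact he0T₁ ((hmem T₁ e0).mp h1)
      · rintro ⟨h1, h2⟩
        exact ⟨(hmem T₁ x).mpr (hCQ x h2 h1), h2⟩
    have hcarde : (C.erase e0).card = D := by
      rw [Finset.card_erase_of_mem he0C, hCcard]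
      omega
    have hDle : D ≤ ET₁.card := by
      rw [← hcarde, ← hint]
      exact Finset.card_le_card Finset.inter_subset_left
    have he0ET : e0 ∈ ET ∩ C := Finset.mem_inter.mpr ⟨(hmem T e0).mpr he0T, he0C⟩
    have he0ET₁ : e0 ∉ ET₁ ∩ C := by
      rw [hint]
      simp
    have hsum := aux_sum_wt_eq ET C e0 wt' (fun e _ => hwt'C e)
    have hsum₁ := aux_sum_wt_eq ET₁ C e0 wt' (fun e _ => hwt'C e)
    rw [if_pos he0ET] at hsum
    rw [if_neg he0ET₁] at hsum₁
    have hminv := hmin T₁ hT₁G hT₁conn hT₁acyc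
    rw [← hET₁def] at hminv
    rw [hsum, hsum₁, hint, hcarde] at hminv
    omega
end
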